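/- For n sufficiently large relative to k and d (with 2 ≤ d < k), |A(k,d)| ≥ |H(k,d)| if and only if 2d ≥ k+1. -/

import Mathlib

open Finset

variable {α : Type*} [DecidableEq α]

variable {α : Type*} [DecidableEq α]

lemma count_inter_eq (S T B : Finset α) (k : ℕ) (hTS : T ⊆ S) (hBT : B ⊆ T)
    (hBk : B.card ≤ k) :
    ((S.powersetCard k).filter (fun A => A ∩ T = B)).card
      = (S.card - T.card).choose (k - B.card) := by
  rw [← card_sdiff_of_subset hTS, ← card_powersetCard]
  apply card_bij' (fun A _ => A \ T) (fun C _ => C ∪ B)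
  · intro A hA
    simp only [mem_filter, mem_powersetCard] at hA
    obtain ⟨⟨hAS, hAcard⟩, hAT⟩ := hA
    rw [mem_powersetCard]
    refine ⟨sdiff_subset_sdiff hAS le_rfl, ?_⟩
    have h1 : (A \ T).card + (A ∩ T).card = A.card := by
      rw [card_sdiff_add_card_inter]
    rw [hAT, hAcard] at h1
    omega
  · intro C hC
    rw [mem_powersetCard] at hC
    obtain ⟨hCS, hCcard⟩ := hC
    have hdisj : Disjoint C T := Disjoint.mono_left hCS disjoint_sdiff_self_left
    simp only [mem_filter, mem_powersetCard]
    refine ⟨⟨union_subset (hCS.trans sdiff_subset) (hBT.trans hTS), ?_⟩, ?_⟩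
    · rw [card_union_of_disjoint (hdisj.mono_right hBT), hCcard]
      omega
    · rw [union_inter_distrib_right, (inter_eq_left.2 hBT),
        (disjoint_iff_inter_eq_empty.1 hdisj), empty_union]
  · intro A hA
    simp only [mem_filter, mem_powersetCard] at hA
    rw [← hA.2, sdiff_union_inter]
  · intro C hC
    rw [mem_powersetCard] at hC
    have hdisj : Disjoint C T := Disjoint.mono_left hC.1 disjoint_sdiff_self_left
    rw [union_sdiff_distrib, sdiff_eq_self_of_disjoint hdisj,
      sdiff_eq_empty_iff_subset.2 hBT, union_empty]

lemma count_superset (S B : Finset α) (k : ℕ) (hBS : B ⊆ S) (hBk : B.card ≤ k) :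
    ((S.powersetCard k).filter (fun A => B ⊆ A)).card
      = (S.card - B.card).choose (k - B.card) := by
  rw [← card_sdiff_of_subset hBS, ← card_powersetCard]
  apply card_bij' (fun A _ => A \ B) (fun C _ => C ∪ B)
  · intro A hA
    simp only [mem_filter, mem_powersetCard] at hA
    obtain ⟨⟨hAS, hAcard⟩, hBA⟩ := hA
    rw [mem_powersetCard]
    refine ⟨sdiff_subset_sdiff hAS le_rfl, ?_⟩
    rw [card_sdiff_of_subset hBA, hAcard]
  · intro C hC
    rw [mem_powersetCard] at hC
    obtain ⟨hCS, hCcard⟩ := hC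
    have hdisj : Disjoint C B := Disjoint.mono_left hCS disjoint_sdiff_self_left
    simp only [mem_filter, mem_powersetCard]
    refine ⟨⟨union_subset (hCS.trans sdiff_subset) hBS, ?_⟩, subset_union_right⟩
    rw [card_union_of_disjoint hdisj, hCcard]
    omega
  · intro A hA
    simp only [mem_filter, mem_powersetCard] at hA
    rw [sdiff_union_self_eq_union, union_eq_left.2 hA.2]
  · intro C hC
    rw [mem_powersetCard] at hC
    have hdisj : Disjoint C B := Disjoint.mono_left hC.1 disjoint_sdiff_self_left
    rw [union_sdiff_distrib, sdiff_eq_self_of_disjoint hdisj, sdiff_self, bot_eq_empty, union_empty]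

lemma cardA_eq (n k d : ℕ) (hd : 1 ≤ d) (hdk : d < k) (hn : k + 1 ≤ n) :
    (((Finset.Icc 1 n).powersetCard k).filter
        (fun A => d ≤ (A ∩ Finset.Icc 1 (d + 1)).card)).card
      = (d + 1) * (n - (d+1)).choose (k - d) + (n - (d+1)).choose (k - (d+1)) := by
  set S := Finset.Icc 1 n with hS
  set T := Finset.Icc 1 (d+1) with hT
  have hTS : T ⊆ S := Finset.Icc_subset_Icc_right (by omega)
  have hcS : S.card = n := by rw [hS, Nat.card_Icc]; omega
  have hcT : T.card = d + 1 := by rw [hT, Nat.card_Icc]; omega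
  have hfc : (S.powersetCard k).filter (fun A => d ≤ (A ∩ T).card)
      = (S.powersetCard k).filter (fun A => (A ∩ T).card = d)
        ∪ (S.powersetCard k).filter (fun A => A ∩ T = T) := by
    rw [← filter_or]
    apply filter_congr
    intro A hA
    have hle : (A ∩ T).card ≤ d + 1 := hcT ▸ card_le_card inter_subset_right
    constructor
    · intro h
      rcases Nat.eq_or_lt_of_le h with h' | h'
      · exact Or.inl h'.symm
      · exact Or.inr (eq_of_subset_of_card_le inter_subset_right (by omega))
    · rintro (h | h)
      · omega
      · rw [h]; omega
  rw [hfc, card_union_of_disjoint]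
  · congr 1
    · -- count of exactly d
      have hbi : (S.powersetCard k).filter (fun A => (A ∩ T).card = d)
          = T.biUnion (fun i => (S.powersetCard k).filter (fun A => A ∩ T = T.erase i)) := by
        ext A
        simp only [mem_biUnion, mem_filter]
        constructor
        · rintro ⟨hA, hcard⟩
          have hsub : A ∩ T ⊆ T := inter_subset_right
          have : (T \ (A ∩ T)).card = 1 := by rw [card_sdiff_of_subset hsub]; omega
          obtain ⟨i, hi⟩ := card_eq_one.1 this
          have hiT : i ∈ T := (sdiff_subset (s := T) (t := A ∩ T)) (hi ▸ mem_singleton_self i)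
          have hiA : i ∉ A ∩ T := by
            intro hmem
            have : i ∈ T \ (A ∩ T) := hi ▸ mem_singleton_self i
            exact (mem_sdiff.1 this).2 hmem
          refine ⟨i, hiT, hA, ?_⟩
          apply eq_of_subset_of_card_le
          · exact fun x hx => mem_erase.2 ⟨fun he => hiA (he ▸ hx), hsub hx⟩
          · rw [card_erase_of_mem hiT]; omega
        · rintro ⟨i, hiT, hA, heq⟩
          exact ⟨hA, by rw [heq, card_erase_of_mem hiT]; omega⟩
      rw [hbi, card_biUnion]
      · have : ∀ i ∈ T, ((S.powersetCard k).filter (fun A => A ∩ T = T.erase i)).card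
            = (n - (d+1)).choose (k - d) := by
          intro i hiT
          rw [count_inter_eq S T (T.erase i) k hTS (erase_subset i T) (by rw [card_erase_of_mem hiT]; omega),
            hcS, hcT, card_erase_of_mem hiT, hcT]
          norm_num
        rw [sum_congr rfl this, sum_const, hcT, smul_eq_mul]
      · intro i hi j hj hij
        rw [Function.onFun, Finset.disjoint_left]
        rintro A hA hA'
        simp only [mem_filter] at hA hA'
        have heq := hA.2.symm.trans hA'.2
        have hji : j ∈ T.erase i := mem_erase.2 ⟨Ne.symm hij, hj⟩
        rw [heq] at hji
        exact (mem_erase.1 hji).1 rfl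
    · rw [count_inter_eq S T T k hTS Subset.rfl (by omega), hcS, hcT]
  · rw [Finset.disjoint_left]
    rintro A hA hA'
    simp only [mem_filter] at hA hA'
    rw [hA'.2, hcT] at hA
    omega

lemma cardH_eq (n k d : ℕ) (hd : 1 ≤ d) (hdk : d < k) (hn : k + 1 ≤ n) :
    ((((Finset.Icc 1 n).powersetCard k).filter
          (fun A => Finset.Icc 1 (d - 1) ⊆ A ∧ (A ∩ Finset.Icc d (k + 1)).Nonempty))
        ∪ (Finset.Icc 1 (d - 1)).image (fun i => (Finset.Icc 1 (k + 1)).erase i)).card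
      + (n - (k+1)).choose (k - (d-1))
      = (n - (d-1)).choose (k - (d-1)) + (d - 1) := by
  set S := Finset.Icc 1 n with hS
  set B := Finset.Icc 1 (d-1) with hB
  set T := Finset.Icc 1 (k+1) with hT
  set V := Finset.Icc d (k+1) with hV
  have hcS : S.card = n := by rw [hS, Nat.card_Icc]; omega
  have hcB : B.card = d - 1 := by rw [hB, Nat.card_Icc]; omega
  have hcT : T.card = k + 1 := by rw [hT, Nat.card_Icc]; omega
  have hTS : T ⊆ S := Finset.Icc_subset_Icc_right (by omega)
  have hBT : B ⊆ T := Finset.Icc_subset_Icc_right (by omega)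
  have hBS : B ⊆ S := hBT.trans hTS
  have hBV : Disjoint B V := by
    rw [Finset.disjoint_left]
    intro x hx hx'
    rw [hB, mem_Icc] at hx
    rw [hV, mem_Icc] at hx'
    omega
  have hsplit : (S.powersetCard k).filter (fun A => B ⊆ A)
      = (S.powersetCard k).filter (fun A => B ⊆ A ∧ (A ∩ V).Nonempty)
        ∪ (S.powersetCard k).filter (fun A => A ∩ T = B) := by
    rw [← filter_or]
    apply filter_congr
    intro A _
    constructor
    · intro hBA
      rcases (A ∩ V).eq_empty_or_nonempty with he | hne
      · refine Or.inr ?_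
        have hTBV : T = B ∪ V := by
          ext x
          simp only [hT, hB, hV, mem_union, mem_Icc]
          omega
        rw [hTBV, inter_union_distrib_left, inter_eq_right.2 hBA, he, union_empty]
      · exact Or.inl ⟨hBA, hne⟩
    · rintro (⟨h, _⟩ | h)
      · exact h
      · rw [← h]; exact inter_subset_left
  have hVT : V ⊆ T := Finset.Icc_subset_Icc_left (by omega)
  have hdisj2 : Disjoint
      ((S.powersetCard k).filter (fun A => B ⊆ A ∧ (A ∩ V).Nonempty))
      ((S.powersetCard k).filter (fun A => A ∩ T = B)) := by
    rw [Finset.disjoint_left]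
    rintro A hA hA'
    simp only [mem_filter] at hA hA'
    obtain ⟨x, hx⟩ := hA.2.2
    have hxV : x ∈ V := (mem_inter.1 hx).2
    have hxB : x ∈ B := by
      rw [← hA'.2]
      exact mem_inter.2 ⟨(mem_inter.1 hx).1, hVT hxV⟩
    exact (Finset.disjoint_left.1 hBV) hxB hxV
  have hkey : ((S.powersetCard k).filter (fun A => B ⊆ A ∧ (A ∩ V).Nonempty)).card
      + (n - (k+1)).choose (k - (d-1)) = (n - (d-1)).choose (k - (d-1)) := by
    have := congrArg Finset.card hsplit
    rw [card_union_of_disjoint hdisj2, count_superset S B k hBS (by omega),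
      count_inter_eq S T B k hTS hBT (by omega), hcS, hcB, hcT] at this
    omega
  have hG : ((Finset.Icc 1 (d-1)).image (fun i => (Finset.Icc 1 (k+1)).erase i)).card
      = d - 1 := by
    rw [card_image_of_injOn, Nat.card_Icc]
    · omega
    · intro i hi j hj hij
      by_contra hne
      have hiT : i ∈ T := hBT hi
      have : i ∈ T.erase j := mem_erase.2 ⟨hne, hiT⟩
      have h2 : T.erase i = T.erase j := hij
      rw [← h2] at this
      exact (mem_erase.1 this).1 rfl
  have hdisjFG : Disjoint
      ((S.powersetCard k).filter (fun A => B ⊆ A ∧ (A ∩ V).Nonempty))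
      ((Finset.Icc 1 (d-1)).image (fun i => (Finset.Icc 1 (k+1)).erase i)) := by
    rw [Finset.disjoint_left]
    rintro A hA hA'
    simp only [mem_image] at hA'
    obtain ⟨i, hi, rfl⟩ := hA'
    simp only [mem_filter] at hA
    have : i ∈ T.erase i := hA.2.1 hi
    exact (mem_erase.1 this).1 rfl
  rw [card_union_of_disjoint hdisjFG, hG]
  omega

lemma hockey (j m : ℕ) : ∀ t : ℕ,
    j.choose (m+1) + ∑ i ∈ Finset.range t, (j+i).choose m = (j+t).choose (m+1) := by
  intro t
  induction t with
  | zero => simp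
  | succ t ih =>
    rw [sum_range_succ, ← add_assoc, ih]
    have : (j + (t+1)).choose (m+1) = (j+t).choose m + (j+t).choose (m+1) := by
      rw [show j + (t+1) = (j+t) + 1 by ring, Nat.choose_succ_succ]
    omega

lemma choose_lb (j e : ℕ) : j + 1 ≤ (j + e + 1).choose (e + 1) := by
  induction e with
  | zero => simp
  | succ e ih =>
    have h := Nat.choose_succ_succ (j + e + 1) (e + 1)
    have h2 : 1 ≤ (j + e + 1).choose (e + 1 + 1) + 1 := by omega
    calc j + 1 ≤ (j + e + 1).choose (e + 1) := ih
      _ ≤ (j + e + 1).choose (e + 1) + (j + e + 1).choose (e + 2) := Nat.le_add_right _ _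
      _ = (j + e + 2).choose (e + 2) := (Nat.choose_succ_succ _ _).symm
      _ = (j + (e+1) + 1).choose (e + 1 + 1) := by ring_nf

lemma pow2_bound (j r : ℕ) (hr : 1 ≤ r) (hj : 2 * r < j) :
    ∀ t : ℕ, (j + t).choose r ≤ 2 ^ t * j.choose r := by
  intro t
  induction t with
  | zero => simp
  | succ t ih =>
    obtain ⟨r', rfl⟩ : ∃ r', r = r' + 1 := ⟨r - 1, by omega⟩
    have hstep : (j + t + 1).choose (r' + 1)
        = (j + t).choose r' + (j + t).choose (r' + 1) := Nat.choose_succ_succ _ _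
    have hmono : (j + t).choose r' ≤ (j + t).choose (r' + 1) := by
      apply Nat.choose_le_succ_of_lt_half_left
      omega
    calc (j + (t+1)).choose (r'+1) = (j + t).choose r' + (j + t).choose (r'+1) := by
          rw [show j + (t+1) = j + t + 1 by ring, hstep]
      _ ≤ 2 * (j + t).choose (r'+1) := by omega
      _ ≤ 2 * (2^t * j.choose (r'+1)) := by
          exact Nat.mul_le_mul_left 2 ih
      _ = 2^(t+1) * j.choose (r'+1) := by ring

-- Case k+1 ≤ 2d  (i.e. e+2 ≤ d): H ≤ A, all j
lemma ineq_le (j e d : ℕ) (hd : e + 2 ≤ d) :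
    (∑ i ∈ Finset.range (e+3), (j+i).choose (e+1)) + (d - 1)
      ≤ (d+1) * (j+e+1).choose (e+1) + (j+e+1).choose e := by
  have hsum : ∑ i ∈ Finset.range (e+3), (j+i).choose (e+1)
      = (∑ i ∈ Finset.range (e+1), (j+i).choose (e+1))
        + (j+e+1).choose (e+1) + (j+e+2).choose (e+1) := by
    rw [sum_range_succ, sum_range_succ]
    ring_nf
  have hp1 : (j+e+2).choose (e+1) = (j+e+1).choose e + (j+e+1).choose (e+1) :=
    Nat.choose_succ_succ _ _
  have hp2 : (j+e+1).choose (e+1) = (j+e).choose e + (j+e).choose (e+1) :=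
    Nat.choose_succ_succ _ _
  have hsmall : ∑ i ∈ Finset.range (e+1), (j+i).choose (e+1)
      ≤ (e+1) * (j+e).choose (e+1) := by
    calc ∑ i ∈ Finset.range (e+1), (j+i).choose (e+1)
        ≤ ∑ _i ∈ Finset.range (e+1), (j+e).choose (e+1) := by
          apply Finset.sum_le_sum
          intro i hi
          exact Nat.choose_le_choose _ (by simp at hi; omega)
      _ = (e+1) * (j+e).choose (e+1) := by rw [sum_const, card_range, smul_eq_mul]
  have hpos : 0 < (j+e).choose e := Nat.choose_pos (by omega)
  -- goal: small + (d-1) ≤ (d-1) * choose(j+e+1, e+1), then add commons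
  have hmid : (e+1) * (j+e).choose (e+1) + (d-1)
      ≤ (d-1) * ((j+e).choose e + (j+e).choose (e+1)) := by
    have h1 : (e+1) * (j+e).choose (e+1) ≤ (d-1) * (j+e).choose (e+1) :=
      Nat.mul_le_mul_right _ (by omega)
    have h2 : (d-1) ≤ (d-1) * (j+e).choose e := Nat.le_mul_of_pos_right _ (by positivity)
    calc (e+1) * (j+e).choose (e+1) + (d-1)
        ≤ (d-1) * (j+e).choose (e+1) + (d-1) * (j+e).choose e := by omega
      _ = (d-1) * ((j+e).choose e + (j+e).choose (e+1)) := by ring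
  rw [hsum, hp1]
  have hfin : (d+1) * (j+e+1).choose (e+1)
      = 2 * (j+e+1).choose (e+1) + (d-1) * (j+e+1).choose (e+1) := by
    have : d + 1 = 2 + (d-1) := by omega
    rw [this]; ring
  rw [hfin, hp2]
  have := hmid
  omega

-- Case d ≤ e+1: A < H, large j
lemma ineq_gt (j e d : ℕ) (hd : 2 ≤ d) (hde : d ≤ e + 1)
    (hj : ((d+1)*(e+1)+1)*(e+1)*2^(e+1) + 2*(e+1) + 2 ≤ j) :
    (d+1) * (j+e+1).choose (e+1) + (j+e+1).choose e
      < (∑ i ∈ Finset.range (e+3), (j+i).choose (e+1)) + (d - 1) := by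
  set a := (d+1)*(e+1)+1 with ha
  -- sum lower bound
  have hsumlb : (e+3) * j.choose (e+1) ≤ ∑ i ∈ Finset.range (e+3), (j+i).choose (e+1) := by
    calc (e+3) * j.choose (e+1) = ∑ _i ∈ Finset.range (e+3), j.choose (e+1) := by
          rw [sum_const, card_range, smul_eq_mul]
      _ ≤ ∑ i ∈ Finset.range (e+3), (j+i).choose (e+1) := by
          apply Finset.sum_le_sum
          intro i _
          exact Nat.choose_le_choose _ (by omega)
  -- choose(j+e+1,e+1) ≤ choose(j,e+1) + (e+1)*choose(j+e+1,e)
  have hA : (j+e+1).choose (e+1) ≤ j.choose (e+1) + (e+1) * (j+e+1).choose e := by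
    have hh := hockey j e (e+1)
    rw [show j + (e+1) = j+e+1 from by ring] at hh
    have hb : ∑ i ∈ Finset.range (e+1), (j+i).choose e ≤ (e+1) * (j+e+1).choose e := by
      calc ∑ i ∈ Finset.range (e+1), (j+i).choose e
          ≤ ∑ _i ∈ Finset.range (e+1), (j+e+1).choose e := by
            apply Finset.sum_le_sum
            intro i hi
            exact Nat.choose_le_choose _ (by simp at hi; omega)
        _ = (e+1) * (j+e+1).choose e := by rw [sum_const, card_range, smul_eq_mul]
    omega
  -- key: a * choose(j+e+1, e) < choose(j, e+1)
  have hkey : a * (j+e+1).choose e < j.choose (e+1) := by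
    have hid : (j+e+1).choose (e+1) * (e+1) = (j+e+1).choose e * (j+1) := by
      have := Nat.choose_succ_right_eq (j+e+1) e
      rw [this]
      congr 1
      omega
    have hp2b : (j+e+1).choose (e+1) ≤ 2^(e+1) * j.choose (e+1) := by
      have := pow2_bound j (e+1) (by omega) (by omega) (e+1)
      calc (j+e+1).choose (e+1) = (j + (e+1)).choose (e+1) := by ring_nf
        _ ≤ 2^(e+1) * j.choose (e+1) := this
    have hcpos : 1 ≤ j.choose (e+1) := Nat.choose_pos (by omega)
    have hmul : a * (j+e+1).choose e * (j+1) < j.choose (e+1) * (j+1) := by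
      calc a * (j+e+1).choose e * (j+1) = a * ((j+e+1).choose e * (j+1)) := by ring
        _ = a * ((j+e+1).choose (e+1) * (e+1)) := by rw [hid]
        _ = a * (e+1) * (j+e+1).choose (e+1) := by ring
        _ ≤ a * (e+1) * (2^(e+1) * j.choose (e+1)) := Nat.mul_le_mul_left _ hp2b
        _ = (a * (e+1) * 2^(e+1)) * j.choose (e+1) := by ring
        _ < (j+1) * j.choose (e+1) := by
            have hlt : a * (e+1) * 2^(e+1) < j + 1 := by omega
            exact (Nat.mul_lt_mul_right hcpos).2 hlt
        _ = j.choose (e+1) * (j+1) := by ring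
    exact Nat.lt_of_mul_lt_mul_right hmul
  -- assemble
  have hmain : (d+1) * (j+e+1).choose (e+1) + (j+e+1).choose e
      < (d+2) * j.choose (e+1) := by
    calc (d+1) * (j+e+1).choose (e+1) + (j+e+1).choose e
        ≤ (d+1) * (j.choose (e+1) + (e+1) * (j+e+1).choose e) + (j+e+1).choose e :=
          by exact Nat.add_le_add_right (Nat.mul_le_mul_left _ hA) _
      _ = (d+1) * j.choose (e+1) + a * (j+e+1).choose e := by rw [ha]; ring
      _ < (d+1) * j.choose (e+1) + j.choose (e+1) := by omega
      _ = (d+2) * j.choose (e+1) := by ring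
  have hd2 : (d+2) * j.choose (e+1) ≤ (e+3) * j.choose (e+1) :=
    Nat.mul_le_mul_right _ (by omega)
  omega


theorem A_vs_H_size_comparison (k d : ℕ) (hd : 2 ≤ d) (hdk : d < k) :
    ∃ N : ℕ, ∀ n ≥ N,
      (((((Finset.Icc 1 n).powersetCard k).filter
            (fun A => Finset.Icc 1 (d - 1) ⊆ A ∧ (A ∩ Finset.Icc d (k + 1)).Nonempty)) ∪
          (Finset.Icc 1 (d - 1)).image (fun i => (Finset.Icc 1 (k + 1)).erase i)).card ≤
        (((Finset.Icc 1 n).powersetCard k).filter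
          (fun A => d ≤ (A ∩ Finset.Icc 1 (d + 1)).card)).card ↔ k + 1 ≤ 2 * d) := by
  obtain ⟨e, rfl⟩ : ∃ e, k = d + e + 1 := ⟨k - d - 1, by omega⟩
  set k := d + e + 1 with hk
  refine ⟨(d+e+2) + (((d+1)*(e+1)+1)*(e+1)*2^(e+1) + 2*(e+1) + 2), fun n hn => ?_⟩
  obtain ⟨j, rfl⟩ : ∃ j, n = j + (d+e+2) := ⟨n - (d+e+2), by omega⟩
  set n := j + (d+e+2) with hn'
  have hnk : k + 1 ≤ n := by omega
  -- A side
  have hA := cardA_eq n k d (by omega) hdk hnk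
  have e1 : n - (d+1) = j + e + 1 := by omega
  have e2 : k - d = e + 1 := by omega
  have e3 : k - (d+1) = e := by omega
  rw [e1, e2, e3] at hA
  -- H side
  have hH := cardH_eq n k d (by omega) hdk hnk
  have e4 : n - (k+1) = j := by omega
  have e5 : k - (d-1) = e + 2 := by omega
  have e6 : n - (d-1) = j + e + 3 := by omega
  rw [e4, e5, e6] at hH
  have hhk := hockey j (e+1) (e+3)
  rw [show j + (e+3) = j + e + 3 from by ring, show e+1+1 = e+2 from rfl] at hhk
  have hH' : ((((Finset.Icc 1 n).powersetCard k).filter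
          (fun A => Finset.Icc 1 (d - 1) ⊆ A ∧ (A ∩ Finset.Icc d (k + 1)).Nonempty))
        ∪ (Finset.Icc 1 (d - 1)).image (fun i => (Finset.Icc 1 (k + 1)).erase i)).card
      = (∑ i ∈ Finset.range (e+3), (j+i).choose (e+1)) + (d - 1) := by omega
  rw [hA, hH']
  by_cases hcase : k + 1 ≤ 2 * d
  · simp only [hcase, iff_true]
    exact ineq_le j e d (by omega)
  · simp only [hcase, iff_false, not_le]
    exact ineq_gt j e d hd (by omega) (by omega)
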